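/- arXiv:2503.16210 — 2 statements merged into one kernel-verified Lean document; each statement's English description precedes it below -/
import Mathlib

section
/- Let X be a real Banach space, let A, B : X →L[ℝ] X be bounded linear operators that commute (A ∘ B = B ∘ A), and let τ > 0. Then τ·φ₁(τ·(A+B)) − τ·φ₁(τ·A) ∘ φ₁(τ·B) = (1/τ) · ∫_{s∈[0,τ]} ∫_{σ∈[0,τ]} ∫_{ξ∈[s,σ]} (τ−s) · exp((τ−ξ)·A) ∘ φ₁((τ−s)·B) ∘ B ∘ A dξ dσ ds, where the inner integral over ξ from s to σ is an oriented (interval) integral. -/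
open MeasureTheory intervalIntegral
open scoped Nat

set_option synthInstance.maxHeartbeats 1000000
set_option maxHeartbeats 1000000
set_option linter.unusedSectionVars false

/-- The operator `φ_ℓ(T) = ∑_{k=0}^∞ T^k / (ℓ+k)!` (for `ℓ = 0` this is `exp T`). -/
noncomputable def phi {X : Type*} [NormedAddCommGroup X] [NormedSpace ℝ X] [CompleteSpace X]
    (ℓ : ℕ) (T : X →L[ℝ] X) : X →L[ℝ] X :=
  ∑' k : ℕ, (((ℓ + k)! : ℝ)⁻¹) • T ^ k

section helpers
variable {X : Type*} [NormedAddCommGroup X] [NormedSpace ℝ X] [CompleteSpace X]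

noncomputable instance : NormedAlgebra ℚ (X →L[ℝ] X) := NormedAlgebra.restrictScalars ℚ ℝ _

lemma phi_summable (T : X →L[ℝ] X) : Summable fun k : ℕ => (((1 + k)! : ℝ)⁻¹) • T ^ k := by
  apply Summable.of_norm_bounded (g := fun k => (k ! : ℝ)⁻¹ * ‖T‖ ^ k)
  · simpa [div_eq_inv_mul] using Real.summable_pow_div_factorial ‖T‖
  intro k
  rw [norm_smul (((1 + k)! : ℝ)⁻¹) (T ^ k), Real.norm_eq_abs, abs_of_nonneg (by positivity)]
  apply mul_le_mul
  · apply inv_anti₀ (by positivity)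
    exact_mod_cast Nat.factorial_le (by omega)
  · cases k with
    | zero => simp; exact ContinuousLinearMap.norm_id_le
    | succ n => simpa using norm_pow_le' T n.succ_pos
  · exact norm_nonneg _
  · positivity

lemma exp_eq_one_add_mul_phi (T : X →L[ℝ] X) :
    NormedSpace.exp T = 1 + T * phi 1 T := by
  rw [NormedSpace.exp_eq_tsum (𝕂 := ℝ)]
  beta_reduce
  rw [(NormedSpace.expSeries_summable' (𝕂 := ℝ) T).tsum_eq_zero_add]
  congr 1
  · simp
  rw [phi, ← (phi_summable T).tsum_mul_left T]
  exact tsum_congr fun k => by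
    rw [mul_smul_comm, ← pow_succ']
    congr 2
    rw [add_comm]

lemma mul_phi_eq (T : X →L[ℝ] X) : T * phi 1 T = NormedSpace.exp T - 1 := by
  rw [exp_eq_one_add_mul_phi]; abel

lemma Commute.phi_right {A T : X →L[ℝ] X} (h : Commute A T) : Commute A (phi 1 T) := by
  unfold Commute SemiconjBy phi
  rw [← (phi_summable T).tsum_mul_left, ← (phi_summable T).tsum_mul_right]
  exact tsum_congr fun k => by
    rw [mul_smul_comm, smul_mul_assoc, (h.pow_right k).eq]

lemma phi_mul_eq (T : X →L[ℝ] X) : phi 1 T * T = NormedSpace.exp T - 1 := by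
  rw [← ((Commute.refl T).phi_right).eq, mul_phi_eq]

lemma exp_smul_eq_tsum (T : X →L[ℝ] X) (s : ℝ) :
    NormedSpace.exp (s • T) = ∑' k : ℕ, (s ^ k / (k ! : ℝ)) • T ^ k := by
  rw [NormedSpace.exp_eq_tsum (𝕂 := ℝ)]; beta_reduce
  exact tsum_congr fun k => by
    rw [smul_pow, smul_smul, div_eq_inv_mul]

lemma integral_exp_smul (T : X →L[ℝ] X) {t : ℝ} (ht : 0 ≤ t) :
    (∫ s in (0:ℝ)..t, NormedSpace.exp (s • T)) = t • phi 1 (t • T) := by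
  have hcont : ∀ k : ℕ, Continuous fun s : ℝ => (s ^ k / (k ! : ℝ)) • T ^ k :=
    fun k => ((continuous_pow k).div_const _).smul continuous_const
  have hint : ∀ k : ℕ, IntegrableOn (fun s : ℝ => (s ^ k / (k ! : ℝ)) • T ^ k)
      (Set.Ioc (0:ℝ) t) volume := fun k => (hcont k).integrableOn_Ioc
  have hbig : Summable fun k : ℕ => (t ^ k / (k ! : ℝ) * ‖T ^ k‖) * t := by
    apply Summable.mul_right
    have := NormedSpace.norm_expSeries_summable' (𝕂 := ℝ) (t • T)
    apply this.congr
    intro k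
    rw [norm_smul ((k ! : ℝ)⁻¹) ((t • T) ^ k), smul_pow,
      norm_smul (t ^ k) (T ^ k), Real.norm_eq_abs, Real.norm_eq_abs,
      abs_of_nonneg (by positivity : (0:ℝ) ≤ (k ! : ℝ)⁻¹), abs_of_nonneg (by positivity)]
    ring
  have hsum : Summable fun k : ℕ =>
      ∫ s in Set.Ioc (0:ℝ) t, ‖(s ^ k / (k ! : ℝ)) • T ^ k‖ := by
    apply Summable.of_nonneg_of_le (fun k => integral_nonneg fun s => norm_nonneg _)
      (fun k => ?_) hbig
    have h1 : ∫ s in Set.Ioc (0:ℝ) t, ‖(s ^ k / (k ! : ℝ)) • T ^ k‖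
        = ‖∫ s in Set.Ioc (0:ℝ) t, ‖(s ^ k / (k ! : ℝ)) • T ^ k‖‖ :=
      (Real.norm_of_nonneg (integral_nonneg fun s => norm_nonneg _)).symm
    rw [h1]
    have h2 := norm_setIntegral_le_of_norm_le_const
      (μ := volume) (s := Set.Ioc (0:ℝ) t)
      (f := fun s => ‖(s ^ k / (k ! : ℝ)) • T ^ k‖)
      (C := t ^ k / (k ! : ℝ) * ‖T ^ k‖)
      measure_Ioc_lt_top ?_
    · refine h2.trans ?_
      show _ * (volume (Set.Ioc (0:ℝ) t)).toReal ≤ _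
      rw [Real.volume_Ioc, sub_zero, ENNReal.toReal_ofReal ht]
    · intro s hs
      rw [Real.norm_of_nonneg (norm_nonneg _),
        norm_smul (s ^ k / (k ! : ℝ)) (T ^ k), Real.norm_eq_abs,
        abs_of_nonneg (div_nonneg (pow_nonneg hs.1.le k) (by positivity))]
      have hle : s ^ k / (k ! : ℝ) ≤ t ^ k / (k ! : ℝ) := by
        gcongr
        exacts [hs.1.le, hs.2]
      exact mul_le_mul_of_nonneg_right hle (norm_nonneg _)
  rw [intervalIntegral.integral_of_le ht]
  simp_rw [exp_smul_eq_tsum]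
  rw [← MeasureTheory.integral_tsum_of_summable_integral_norm hint hsum]
  rw [phi, ← (phi_summable (t • T)).tsum_const_smul t]
  refine tsum_congr fun k => ?_
  rw [_root_.integral_smul_const]
  have h3 : ∫ s in Set.Ioc (0:ℝ) t, s ^ k / (k ! : ℝ)
      = t ^ (k+1) / ((k+1) * (k ! : ℝ)) := by
    rw [MeasureTheory.integral_div, ← intervalIntegral.integral_of_le ht, integral_pow]
    simp [div_div]
  rw [h3, smul_pow, smul_smul, smul_smul]
  congr 1
  have h4 : ((1+k)! : ℝ) = (k+1) * (k ! : ℝ) := by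
    rw [add_comm 1 k]
    push_cast [Nat.factorial_succ]
    ring
  rw [h4]
  have hk : ((k:ℝ)+1) ≠ 0 := by positivity
  have hf : (k ! : ℝ) ≠ 0 := by positivity
  field_simp
  ring

lemma integral_exp_mul_right (C : X →L[ℝ] X) (τ s σ : ℝ) :
    (∫ ξ in s..σ, NormedSpace.exp ((τ - ξ) • C) * C)
      = NormedSpace.exp ((τ - s) • C) - NormedSpace.exp ((τ - σ) • C) := by
  have hc : Continuous fun ξ : ℝ => NormedSpace.exp ((τ - ξ) • C) * C :=
    (NormedSpace.exp_continuous.comp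
      ((continuous_const.sub continuous_id).smul continuous_const)).mul continuous_const
  have hD : ∀ ξ : ℝ, HasDerivAt (fun u : ℝ => -NormedSpace.exp ((τ - u) • C))
      (NormedSpace.exp ((τ - ξ) • C) * C) ξ := by
    intro ξ
    have h1 : HasDerivAt (fun u : ℝ => τ - u) (-1) ξ := by
      simpa using (hasDerivAt_id ξ).const_sub τ
    have h2 := hasDerivAt_exp_smul_const (𝕂 := ℝ) C (τ - ξ)
    have h3 : HasDerivAt (fun u : ℝ => NormedSpace.exp ((τ - u) • C))
        ((-1 : ℝ) • (NormedSpace.exp ((τ - ξ) • C) * C)) ξ := HasDerivAt.scomp ξ h2 h1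
    simpa [Pi.neg_def] using h3.neg
  rw [intervalIntegral.integral_eq_sub_of_hasDerivAt (fun ξ _ => hD ξ)
    (hc.intervalIntegrable s σ)]
  abel

end helpers

theorem stmt13 {X : Type*} [NormedAddCommGroup X] [NormedSpace ℝ X] [CompleteSpace X]
    (A B : X →L[ℝ] X) (hcomm : A.comp B = B.comp A) (τ : ℝ) (hτ : 0 < τ) :
    τ • phi 1 (τ • (A + B)) - τ • (phi 1 (τ • A)).comp (phi 1 (τ • B)) =
      τ⁻¹ • ∫ s in (0:ℝ)..τ, ∫ σ in (0:ℝ)..τ, ∫ ξ in s..σ, (τ - s) •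
        ((NormedSpace.exp ((τ - ξ) • A)).comp
          ((phi 1 ((τ - s) • B)).comp (B.comp A))) := by
  have hAB : Commute A B := by
    rw [Commute, SemiconjBy, ContinuousLinearMap.mul_def, ContinuousLinearMap.mul_def]
    exact hcomm
  have cexp : ∀ C : X →L[ℝ] X, Continuous fun u : ℝ => NormedSpace.exp ((τ - u) • C) :=
    fun C => NormedSpace.exp_continuous.comp
      ((continuous_const.sub continuous_id).smul continuous_const)
  set P : X →L[ℝ] X := phi 1 (τ • A) with hP
  have hsub : ∀ C : X →L[ℝ] X,
      (∫ u in (0:ℝ)..τ, NormedSpace.exp ((τ - u) • C)) = τ • phi 1 (τ • C) := by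
    intro C
    rw [intervalIntegral.integral_comp_sub_left (fun u => NormedSpace.exp (u • C)) τ]
    simp only [sub_self, sub_zero]
    exact integral_exp_smul C hτ.le
  -- Step 1 : inner integral
  have hinner : ∀ s σ : ℝ,
      (∫ ξ in s..σ, (τ - s) •
        (NormedSpace.exp ((τ - ξ) • A) * (phi 1 ((τ - s) • B) * (B * A))))
      = (NormedSpace.exp ((τ - s) • A) - NormedSpace.exp ((τ - σ) • A)) *
          (NormedSpace.exp ((τ - s) • B) - 1) := by
    intro s σ
    have hAphi : Commute A (phi 1 ((τ - s) • B)) := (hAB.smul_right (τ - s)).phi_right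
    have h1 : A * (phi 1 ((τ - s) • B) * B) = (phi 1 ((τ - s) • B) * B) * A := by
      calc A * (phi 1 ((τ - s) • B) * B) = (A * phi 1 ((τ - s) • B)) * B :=
            (mul_assoc _ _ _).symm
        _ = (phi 1 ((τ - s) • B) * A) * B := by rw [hAphi.eq]
        _ = phi 1 ((τ - s) • B) * (A * B) := mul_assoc _ _ _
        _ = phi 1 ((τ - s) • B) * (B * A) := by rw [hAB.eq]
        _ = (phi 1 ((τ - s) • B) * B) * A := (mul_assoc _ _ _).symm
    have hre : ∀ ξ : ℝ,
        NormedSpace.exp ((τ - ξ) • A) * (phi 1 ((τ - s) • B) * (B * A))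
        = (NormedSpace.exp ((τ - ξ) • A) * A) * (phi 1 ((τ - s) • B) * B) := by
      intro ξ
      rw [show phi 1 ((τ - s) • B) * (B * A) = (phi 1 ((τ - s) • B) * B) * A from
        (mul_assoc _ _ _).symm, ← h1, ← mul_assoc]
    simp_rw [hre]
    rw [intervalIntegral.integral_smul]
    have hRmul : (∫ ξ in s..σ, (NormedSpace.exp ((τ - ξ) • A) * A) *
          (phi 1 ((τ - s) • B) * B))
        = (∫ ξ in s..σ, NormedSpace.exp ((τ - ξ) • A) * A) *
            (phi 1 ((τ - s) • B) * B) := by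
      simpa only [ContinuousLinearMap.flip_apply, ContinuousLinearMap.mul_apply', Pi.mul_apply] using
        ContinuousLinearMap.intervalIntegral_comp_comm
          ((ContinuousLinearMap.mul ℝ (X →L[ℝ] X)).flip (phi 1 ((τ - s) • B) * B))
          (((cexp A).mul continuous_const).intervalIntegrable s σ)
    rw [hRmul, integral_exp_mul_right, ← mul_smul_comm]
    congr 1
    rw [← mul_smul_comm, phi_mul_eq]
  -- Step 2 : middle integral
  have hmid : ∀ s : ℝ,
      (∫ σ in (0:ℝ)..τ,
        (NormedSpace.exp ((τ - s) • A) - NormedSpace.exp ((τ - σ) • A)) *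
          (NormedSpace.exp ((τ - s) • B) - 1))
      = (τ • NormedSpace.exp ((τ - s) • A) - τ • P) *
          (NormedSpace.exp ((τ - s) • B) - 1) := by
    intro s
    have hRmul : (∫ σ in (0:ℝ)..τ,
          (NormedSpace.exp ((τ - s) • A) - NormedSpace.exp ((τ - σ) • A)) *
            (NormedSpace.exp ((τ - s) • B) - 1))
        = (∫ σ in (0:ℝ)..τ,
            NormedSpace.exp ((τ - s) • A) - NormedSpace.exp ((τ - σ) • A)) *
              (NormedSpace.exp ((τ - s) • B) - 1) := by
      simpa only [ContinuousLinearMap.flip_apply, ContinuousLinearMap.mul_apply', Pi.sub_apply] using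
        ContinuousLinearMap.intervalIntegral_comp_comm
          ((ContinuousLinearMap.mul ℝ (X →L[ℝ] X)).flip
            (NormedSpace.exp ((τ - s) • B) - 1))
          ((continuous_const.sub (cexp A)).intervalIntegrable 0 τ)
    rw [hRmul, intervalIntegral.integral_sub intervalIntegrable_const
      ((cexp A).intervalIntegrable 0 τ), intervalIntegral.integral_const, hsub A, sub_zero]
  -- Step 3 : expand the outer integrand
  have hg : ∀ s : ℝ,
      (τ • NormedSpace.exp ((τ - s) • A) - τ • P) *
        (NormedSpace.exp ((τ - s) • B) - 1)
      = τ • NormedSpace.exp ((τ - s) • (A + B)) - τ • NormedSpace.exp ((τ - s) • A)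
        - τ • (P * NormedSpace.exp ((τ - s) • B)) + τ • P := by
    intro s
    have hexp : NormedSpace.exp ((τ - s) • (A + B))
        = NormedSpace.exp ((τ - s) • A) * NormedSpace.exp ((τ - s) • B) := by
      rw [smul_add, NormedSpace.exp_add_of_commute ((hAB.smul_left _).smul_right _)]
    rw [hexp]
    simp only [sub_mul, mul_sub, smul_mul_assoc, mul_one]
    abel
  -- Step 4 : outer integral
  have hLmul : (∫ s in (0:ℝ)..τ, P * NormedSpace.exp ((τ - s) • B))
      = P * (τ • phi 1 (τ • B)) := by
    rw [← hsub B]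
    simpa only [ContinuousLinearMap.mul_apply'] using
      ContinuousLinearMap.intervalIntegral_comp_comm
        (ContinuousLinearMap.mul ℝ (X →L[ℝ] X) P) ((cexp B).intervalIntegrable 0 τ)
  have i1 : IntervalIntegrable (fun s : ℝ => τ • NormedSpace.exp ((τ - s) • (A + B)))
      volume 0 τ := ((cexp (A + B)).const_smul τ).intervalIntegrable 0 τ
  have i2 : IntervalIntegrable (fun s : ℝ => τ • NormedSpace.exp ((τ - s) • A))
      volume 0 τ := ((cexp A).const_smul τ).intervalIntegrable 0 τ
  have i3 : IntervalIntegrable (fun s : ℝ => τ • (P * NormedSpace.exp ((τ - s) • B)))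
      volume 0 τ := (((continuous_const.mul (cexp B))).const_smul τ).intervalIntegrable 0 τ
  have houter : (∫ s in (0:ℝ)..τ,
        (τ • NormedSpace.exp ((τ - s) • (A + B)) - τ • NormedSpace.exp ((τ - s) • A)
          - τ • (P * NormedSpace.exp ((τ - s) • B)) + τ • P))
      = τ • (τ • phi 1 (τ • (A + B))) - τ • (τ • P) - τ • (P * (τ • phi 1 (τ • B)))
          + τ • ((τ : ℝ) • P) := by
    rw [intervalIntegral.integral_add ((i1.sub i2).sub i3) intervalIntegrable_const,
      intervalIntegral.integral_sub (i1.sub i2) i3,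
      intervalIntegral.integral_sub i1 i2,
      intervalIntegral.integral_smul, intervalIntegral.integral_smul,
      intervalIntegral.integral_smul, hsub (A + B), hsub A, hLmul,
      intervalIntegral.integral_const, sub_zero]
  -- Assemble
  simp only [← ContinuousLinearMap.mul_def]
  simp_rw [hinner, hmid, hg]
  rw [houter]
  have hτ' : (τ : ℝ) ≠ 0 := ne_of_gt hτ
  rw [mul_smul_comm τ P (phi 1 (τ • B))]
  simp only [smul_smul, smul_sub, smul_add]
  rw [show τ⁻¹ * (τ * τ) = τ by field_simp]
  abel
end

section
/- Let X be a real Banach space and let A, B : X →L[ℝ] X be bounded linear operators that commute (A ∘ B = B ∘ A). Then there exists a constant C ≥ 0 such that for all τ ∈ [0, 1], ‖τ·φ₁(τ·(A+B)) − τ·φ₁(τ·A) ∘ φ₁(τ·B) − (τ³/12)·(B ∘ A)‖ ≤ C·τ⁴. -/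
open MeasureTheory intervalIntegral
open scoped Nat

set_option maxHeartbeats 1000000
set_option synthInstance.maxHeartbeats 400000

section Aux
variable {X : Type*} [NormedAddCommGroup X] [NormedSpace ℝ X] [CompleteSpace X]


omit [CompleteSpace X] in
lemma my_norm_pow_le (T : X →L[ℝ] X) (k : ℕ) : ‖T ^ k‖ ≤ ‖T‖ ^ k := by
  induction k with
  | zero => rw [pow_zero, pow_zero]; exact ContinuousLinearMap.norm_id_le
  | succ n ih =>
    calc ‖T ^ (n+1)‖ = ‖T ^ n * T‖ := by rw [pow_succ]
    _ ≤ ‖T ^ n‖ * ‖T‖ := norm_mul_le _ _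
    _ ≤ ‖T‖ ^ n * ‖T‖ := by gcongr
    _ = ‖T‖ ^ (n+1) := (pow_succ _ _).symm

lemma phi1_taylor (T : X →L[ℝ] X) {τ : ℝ} (h0 : 0 ≤ τ) (h1 : τ ≤ 1) :
    ‖phi 1 (τ • T) - (1 + (τ/2) • T + (τ^2/6) • T^2)‖
      ≤ τ^3 * (‖T‖^3 * ∑' i : ℕ, ‖T‖^i / i !) := by
  set f : ℕ → (X →L[ℝ] X) := fun k => (((1 + k)! : ℝ)⁻¹) • (τ • T) ^ k with hf
  have hTnorm : ‖τ • T‖ = τ * ‖T‖ := by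
    rw [show ‖τ • T‖ = ‖τ‖ * ‖T‖ from norm_smul τ T, Real.norm_eq_abs, abs_of_nonneg h0]
  have hnorm : ∀ k, ‖f k‖ ≤ ‖τ • T‖ ^ k / k ! := by
    intro k
    show ‖(((1 + k)! : ℝ)⁻¹) • (τ • T) ^ k‖ ≤ _
    rw [show ‖(((1 + k)! : ℝ)⁻¹) • (τ • T) ^ k‖ = ‖(((1 + k)! : ℝ)⁻¹)‖ * ‖(τ • T) ^ k‖ from norm_smul (β := X →L[ℝ] X) _ _]
    calc ‖(((1 + k)! : ℝ)⁻¹)‖ * ‖(τ • T) ^ k‖ ≤ (((k)! : ℝ))⁻¹ * ‖τ • T‖ ^ k := by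
          apply mul_le_mul _ (my_norm_pow_le _ _) (norm_nonneg _) (by positivity)
          rw [Real.norm_eq_abs, abs_of_nonneg (by positivity)]
          apply inv_anti₀ (by positivity)
          exact Nat.cast_le.2 (Nat.factorial_le (by omega))
      _ = ‖τ • T‖ ^ k / k ! := by ring
  have hsumnorm : Summable (fun k => ‖f k‖) :=
    Summable.of_nonneg_of_le (fun k => norm_nonneg _) hnorm
      (Real.summable_pow_div_factorial _)
  have hsum : Summable f := hsumnorm.of_norm
  have hphi : phi 1 (τ • T) = ∑' k, f k := rfl
  have hsplit := Summable.sum_add_tsum_nat_add 3 hsum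
  have hrange : ∑ i ∈ Finset.range 3, f i = 1 + (τ/2) • T + (τ^2/6) • T^2 := by
    rw [Finset.sum_range_succ, Finset.sum_range_succ, Finset.sum_range_one]
    have e0 : f 0 = 1 := by
      show (((1+0)! : ℝ)⁻¹) • (τ • T) ^ 0 = 1
      norm_num
    have e1 : f 1 = (τ/2) • T := by
      show (((1+1)! : ℝ)⁻¹) • (τ • T) ^ 1 = _
      rw [pow_one, smul_smul]
      norm_num [Nat.factorial]
      congr 1
      ring
    have e2 : f 2 = (τ^2/6) • T^2 := by
      show (((1+2)! : ℝ)⁻¹) • (τ • T) ^ 2 = _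
      rw [smul_pow, smul_smul]
      norm_num [Nat.factorial]
      congr 1
      ring
    rw [e0, e1, e2]
  have hdiff : phi 1 (τ • T) - (1 + (τ/2) • T + (τ^2/6) • T^2) = ∑' i, f (i + 3) := by
    rw [hphi, ← hsplit, hrange]; abel
  rw [hdiff]
  have hsum3 : Summable (fun i => ‖f (i + 3)‖) := (summable_nat_add_iff (f := fun k => ‖f k‖) 3).2 hsumnorm
  have hbound : ∀ i, ‖f (i + 3)‖ ≤ (τ^3 * ‖T‖^3) * (‖T‖ ^ i / i !) := by
    intro i
    calc ‖f (i + 3)‖ ≤ ‖τ • T‖ ^ (i + 3) / (i + 3)! := hnorm _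
      _ = τ ^ (i+3) * ‖T‖ ^ (i+3) / (i+3)! := by rw [hTnorm, mul_pow]
      _ ≤ τ ^ 3 * ‖T‖ ^ (i+3) / i ! := by
          apply div_le_div₀ (by positivity)
          · exact mul_le_mul_of_nonneg_right
              (pow_le_pow_of_le_one h0 h1 (by omega)) (by positivity)
          · positivity
          · exact Nat.cast_le.2 (Nat.factorial_le (by omega))
      _ = (τ^3 * ‖T‖^3) * (‖T‖ ^ i / i !) := by rw [pow_add]; ring
  calc ‖∑' i, f (i + 3)‖ ≤ ∑' i, ‖f (i + 3)‖ := norm_tsum_le_tsum_norm hsum3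
    _ ≤ ∑' i, (τ^3 * ‖T‖^3) * (‖T‖ ^ i / i !) := by
        apply Summable.tsum_le_tsum hbound hsum3
        exact (Real.summable_pow_div_factorial _).mul_left _
    _ = τ^3 * (‖T‖^3 * ∑' i : ℕ, ‖T‖^i / i !) := by
        rw [tsum_mul_left]; ring

end Aux

theorem stmt16 {X : Type*} [NormedAddCommGroup X] [NormedSpace ℝ X] [CompleteSpace X]
    (A B : X →L[ℝ] X) (hcomm : A.comp B = B.comp A) :
    ∃ C : ℝ, 0 ≤ C ∧ ∀ τ ∈ Set.Icc (0:ℝ) 1,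
      ‖τ • phi 1 (τ • (A + B)) - τ • (phi 1 (τ • A)).comp (phi 1 (τ • B))
        - (τ^3/12) • B.comp A‖ ≤ C * τ^4 := by
  have hAB : A * B = B * A := hcomm
  set S := A + B with hS
  set EA := ∑' i : ℕ, ‖A‖^i / i ! with hEA
  set EB := ∑' i : ℕ, ‖B‖^i / i ! with hEB
  set ES := ∑' i : ℕ, ‖S‖^i / i ! with hES
  have hEA0 : 0 ≤ EA := tsum_nonneg fun i => by positivity
  have hEB0 : 0 ≤ EB := tsum_nonneg fun i => by positivity
  have hES0 : 0 ≤ ES := tsum_nonneg fun i => by positivity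
  set MA := ‖A‖^3 * EA with hMA
  set MB := ‖B‖^3 * EB with hMB
  set MS := ‖S‖^3 * ES with hMS
  have hMA0 : 0 ≤ MA := by positivity
  have hMB0 : 0 ≤ MB := by positivity
  have hMS0 : 0 ≤ MS := by positivity
  set KA := 1 + ‖A‖/2 + ‖A‖^2/6 with hKA
  set KB := 1 + ‖B‖/2 + ‖B‖^2/6 with hKB
  have hKA0 : 0 ≤ KA := by positivity
  have hKB0 : 0 ≤ KB := by positivity
  refine ⟨‖A‖*‖B‖^2/12 + ‖A‖^2*‖B‖/12 + ‖A‖^2*‖B‖^2/36 + MS + MA*KB + KA*MB + MA*MB,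
    by positivity, ?_⟩
  rintro τ ⟨h0, h1⟩
  set PA : X →L[ℝ] X := 1 + (τ/2) • A + (τ^2/6) • A^2 with hPA
  set PB : X →L[ℝ] X := 1 + (τ/2) • B + (τ^2/6) • B^2 with hPB
  set PS : X →L[ℝ] X := 1 + (τ/2) • S + (τ^2/6) • S^2 with hPS
  set RA : X →L[ℝ] X := phi 1 (τ • A) - PA with hRA
  set RB : X →L[ℝ] X := phi 1 (τ • B) - PB with hRB
  set RS : X →L[ℝ] X := phi 1 (τ • S) - PS with hRS
  have hRAn : ‖RA‖ ≤ τ^3 * MA := phi1_taylor A h0 h1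
  have hRBn : ‖RB‖ ≤ τ^3 * MB := phi1_taylor B h0 h1
  have hRSn : ‖RS‖ ≤ τ^3 * MS := phi1_taylor S h0 h1
  have hphiA : phi 1 (τ • A) = PA + RA := by rw [hRA]; abel
  have hphiB : phi 1 (τ • B) = PB + RB := by rw [hRB]; abel
  have hphiS : phi 1 (τ • S) = PS + RS := by rw [hRS]; abel
  have key : τ • PS - τ • (PA*PB) - (τ^3/12) • (B*A)
      = (-(τ^4/12)) • (A*(B*B)) + (-(τ^4/12)) • (A*(A*B)) + (-(τ^5/36)) • (A*(A*(B*B))) := by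
    rw [hPA, hPB, hPS, hS]
    simp only [pow_two, add_mul, mul_add, smul_mul_assoc, mul_smul_comm, one_mul, mul_one,
      mul_assoc]
    rw [← hAB]
    module
  have expand : (PA+RA)*(PB+RB) = PA*PB + RA*PB + PA*RB + RA*RB := by noncomm_ring
  have decomp : τ • phi 1 (τ • S) - τ • ((phi 1 (τ • A)).comp (phi 1 (τ • B)))
        - (τ^3/12) • B.comp A
      = ((-(τ^4/12)) • (A*(B*B)) + (-(τ^4/12)) • (A*(A*B)) + (-(τ^5/36)) • (A*(A*(B*B))))
        + τ • RS - τ • (RA*PB) - τ • (PA*RB) - τ • (RA*RB) := by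
    rw [← ContinuousLinearMap.mul_def, ← ContinuousLinearMap.mul_def,
      hphiA, hphiB, hphiS, expand, ← key]
    module
  rw [decomp]
  have nsm : ∀ (c : ℝ) (M : X →L[ℝ] X), ‖c • M‖ = ‖c‖ * ‖M‖ :=
    fun c M => norm_smul (β := X →L[ℝ] X) c M
  have habs : ∀ c : ℝ, 0 ≤ c → ‖(-c : ℝ)‖ = c := fun c hc => by
    rw [Real.norm_eq_abs, abs_neg, abs_of_nonneg hc]
  have habs' : ∀ c : ℝ, 0 ≤ c → ‖(c : ℝ)‖ = c := fun c hc => by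
    rw [Real.norm_eq_abs, abs_of_nonneg hc]
  have hone : ‖(1 : X →L[ℝ] X)‖ ≤ 1 := by simpa using my_norm_pow_le A 0
  have hPAn : ‖PA‖ ≤ KA := by
    have e3 : ‖A^2‖ ≤ ‖A‖^2 := my_norm_pow_le A 2
    have t1 : τ/2 * ‖A‖ ≤ ‖A‖/2 := by nlinarith [mul_nonneg (sub_nonneg.2 h1) (norm_nonneg A)]
    have t2 : τ^2 * ‖A^2‖ ≤ ‖A‖^2 :=
      (mul_le_mul (pow_le_one₀ h0 h1) e3 (norm_nonneg _) zero_le_one).trans_eq (one_mul _)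
    calc ‖PA‖ ≤ ‖(1 : X →L[ℝ] X)‖ + ‖(τ/2) • A‖ + ‖(τ^2/6) • A^2‖ := norm_add₃_le
      _ = ‖(1 : X →L[ℝ] X)‖ + τ/2 * ‖A‖ + τ^2/6 * ‖A^2‖ := by
          rw [nsm, nsm, habs' _ (by positivity), habs' _ (by positivity)]
      _ ≤ KA := by rw [hKA]; linarith
  have hPBn : ‖PB‖ ≤ KB := by
    have e3 : ‖B^2‖ ≤ ‖B‖^2 := my_norm_pow_le B 2
    have t1 : τ/2 * ‖B‖ ≤ ‖B‖/2 := by nlinarith [mul_nonneg (sub_nonneg.2 h1) (norm_nonneg B)]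
    have t2 : τ^2 * ‖B^2‖ ≤ ‖B‖^2 :=
      (mul_le_mul (pow_le_one₀ h0 h1) e3 (norm_nonneg _) zero_le_one).trans_eq (one_mul _)
    calc ‖PB‖ ≤ ‖(1 : X →L[ℝ] X)‖ + ‖(τ/2) • B‖ + ‖(τ^2/6) • B^2‖ := norm_add₃_le
      _ = ‖(1 : X →L[ℝ] X)‖ + τ/2 * ‖B‖ + τ^2/6 * ‖B^2‖ := by
          rw [nsm, nsm, habs' _ (by positivity), habs' _ (by positivity)]
      _ ≤ KB := by rw [hKB]; linarith
  have m1 : ‖A*(B*B)‖ ≤ ‖A‖*(‖B‖*‖B‖) :=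
    (norm_mul_le _ _).trans (by gcongr; exact norm_mul_le _ _)
  have m2 : ‖A*(A*B)‖ ≤ ‖A‖*(‖A‖*‖B‖) :=
    (norm_mul_le _ _).trans (by gcongr; exact norm_mul_le _ _)
  have m3 : ‖A*(A*(B*B))‖ ≤ ‖A‖*(‖A‖*(‖B‖*‖B‖)) := by
    refine (norm_mul_le _ _).trans ?_
    gcongr
  have n1 : ‖(-(τ^4/12)) • (A*(B*B))‖ ≤ ‖A‖*‖B‖^2/12 * τ^4 := by
    rw [nsm, habs _ (by positivity)]
    calc τ^4/12 * ‖A*(B*B)‖ ≤ τ^4/12 * (‖A‖*(‖B‖*‖B‖)) := by gcongr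
      _ = ‖A‖*‖B‖^2/12 * τ^4 := by ring
  have n2 : ‖(-(τ^4/12)) • (A*(A*B))‖ ≤ ‖A‖^2*‖B‖/12 * τ^4 := by
    rw [nsm, habs _ (by positivity)]
    calc τ^4/12 * ‖A*(A*B)‖ ≤ τ^4/12 * (‖A‖*(‖A‖*‖B‖)) := by gcongr
      _ = ‖A‖^2*‖B‖/12 * τ^4 := by ring
  have n3 : ‖(-(τ^5/36)) • (A*(A*(B*B)))‖ ≤ ‖A‖^2*‖B‖^2/36 * τ^4 := by
    rw [nsm, habs _ (by positivity)]
    have h54 : τ^5 ≤ τ^4 := pow_le_pow_of_le_one h0 h1 (by norm_num)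
    calc τ^5/36 * ‖A*(A*(B*B))‖ ≤ τ^4/36 * ‖A*(A*(B*B))‖ :=
          mul_le_mul_of_nonneg_right (by linarith) (norm_nonneg _)
      _ ≤ τ^4/36 * (‖A‖*(‖A‖*(‖B‖*‖B‖))) := by gcongr
      _ = ‖A‖^2*‖B‖^2/36 * τ^4 := by ring
  have n4 : ‖τ • RS‖ ≤ MS * τ^4 := by
    rw [nsm, habs' _ h0]
    calc τ * ‖RS‖ ≤ τ * (τ^3 * MS) := mul_le_mul_of_nonneg_left hRSn h0
      _ = MS * τ^4 := by ring
  have n5 : ‖τ • (RA*PB)‖ ≤ MA*KB * τ^4 := by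
    rw [nsm, habs' _ h0]
    have : ‖RA*PB‖ ≤ (τ^3*MA)*KB :=
      (norm_mul_le _ _).trans (mul_le_mul hRAn hPBn (norm_nonneg _)
        (mul_nonneg (pow_nonneg h0 3) hMA0))
    calc τ * ‖RA*PB‖ ≤ τ * ((τ^3*MA)*KB) := mul_le_mul_of_nonneg_left this h0
      _ = (MA*KB) * τ^4 := by ring
  have n6 : ‖τ • (PA*RB)‖ ≤ KA*MB * τ^4 := by
    rw [nsm, habs' _ h0]
    have : ‖PA*RB‖ ≤ KA*(τ^3*MB) :=
      (norm_mul_le _ _).trans (mul_le_mul hPAn hRBn (norm_nonneg _) hKA0)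
    calc τ * ‖PA*RB‖ ≤ τ * (KA*(τ^3*MB)) := mul_le_mul_of_nonneg_left this h0
      _ = (KA*MB) * τ^4 := by ring
  have n7 : ‖τ • (RA*RB)‖ ≤ MA*MB * τ^4 := by
    rw [nsm, habs' _ h0]
    have : ‖RA*RB‖ ≤ (τ^3*MA)*(τ^3*MB) :=
      (norm_mul_le _ _).trans (mul_le_mul hRAn hRBn (norm_nonneg _)
        (mul_nonneg (pow_nonneg h0 3) hMA0))
    calc τ * ‖RA*RB‖ ≤ τ * ((τ^3*MA)*(τ^3*MB)) := mul_le_mul_of_nonneg_left this h0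
      _ = τ^7 * (MA*MB) := by ring
      _ ≤ τ^4 * (MA*MB) := mul_le_mul_of_nonneg_right
            (pow_le_pow_of_le_one h0 h1 (by omega)) (mul_nonneg hMA0 hMB0)
      _ = MA*MB * τ^4 := by ring
  set X1 := (-(τ^4/12)) • (A*(B*B))
  set X2 := (-(τ^4/12)) • (A*(A*B))
  set X3 := (-(τ^5/36)) • (A*(A*(B*B)))
  calc ‖X1 + X2 + X3 + τ • RS - τ • (RA*PB) - τ • (PA*RB) - τ • (RA*RB)‖
      ≤ ‖X1 + X2 + X3 + τ • RS - τ • (RA*PB) - τ • (PA*RB)‖ + ‖τ • (RA*RB)‖ :=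
        norm_sub_le _ _
    _ ≤ (‖X1 + X2 + X3 + τ • RS - τ • (RA*PB)‖ + ‖τ • (PA*RB)‖) + ‖τ • (RA*RB)‖ :=
        add_le_add_left (norm_sub_le _ _) _
    _ ≤ ((‖X1 + X2 + X3 + τ • RS‖ + ‖τ • (RA*PB)‖) + ‖τ • (PA*RB)‖) + ‖τ • (RA*RB)‖ :=
        add_le_add_left (add_le_add_left (norm_sub_le _ _) _) _
    _ ≤ (((‖X1 + X2 + X3‖ + ‖τ • RS‖) + ‖τ • (RA*PB)‖) + ‖τ • (PA*RB)‖) + ‖τ • (RA*RB)‖ :=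
        add_le_add_left (add_le_add_left (add_le_add_left (norm_add_le _ _) _) _) _
    _ ≤ ((((‖X1‖ + ‖X2‖ + ‖X3‖) + ‖τ • RS‖) + ‖τ • (RA*PB)‖) + ‖τ • (PA*RB)‖) + ‖τ • (RA*RB)‖ := by
        have := norm_add₃_le (a := X1) (b := X2) (c := X3)
        linarith
    _ ≤ ‖A‖*‖B‖^2/12 * τ^4 + ‖A‖^2*‖B‖/12 * τ^4 + ‖A‖^2*‖B‖^2/36 * τ^4 + MS * τ^4
          + MA*KB * τ^4 + KA*MB * τ^4 + MA*MB * τ^4 := by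
        exact add_le_add (add_le_add (add_le_add (add_le_add (add_le_add
          (add_le_add n1 n2) n3) n4) n5) n6) n7
    _ = (‖A‖*‖B‖^2/12 + ‖A‖^2*‖B‖/12 + ‖A‖^2*‖B‖^2/36 + MS + MA*KB + KA*MB + MA*MB) * τ^4 := by
        ring
end
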